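/- Let I ⊆ ℝ be an open set with s ≠ 1 for all s ∈ I, and let G : I → ℝ be differentiable with G′(s) = 1/(s³ − 1) for all s ∈ I. Let Ω ⊆ ℝ³ be open with coordinates (x, y, t), and let u : Ω → ℝ be a C² function with u_y ≠ 0 on Ω such that u_t/u_y ∈ I and u_x/u_y ∈ I at every point of Ω, satisfying u_t (u_x³ − u_y³) u_{xy} + u_y (u_t³ − u_x³) u_{xt} + u_x (u_y³ − u_t³) u_{yt} = 0 on Ω. Then ∂_x ( G(u_t/u_y) ) − ∂_t ( G(u_x/u_y) ) = 0 on Ω. -/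

import Mathlib

noncomputable def pd {n : ℕ} (i : Fin n) (f : (Fin n → ℝ) → ℝ) (x : Fin n → ℝ) : ℝ :=
  fderiv ℝ f x (Pi.single i 1)

section aux
variable {E : Type*} [NormedAddCommGroup E] [NormedSpace ℝ E]

lemma fderiv_G_div {f g : E → ℝ} {f' g' : E →L[ℝ] ℝ} {x : E}
    (hf : HasFDerivAt f f' x) (hg : HasFDerivAt g g' x) (hgx : g x ≠ 0)
    {G : ℝ → ℝ} {G' : ℝ} (hG : HasDerivAt G G' (f x / g x)) (v : E) :
    fderiv ℝ (fun y => G (f y / g y)) x v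
      = G' * ((f' v * g x - f x * g' v) / g x ^ 2) := by
  have hinv : HasFDerivAt (fun y => (g y)⁻¹) ((-(g x ^ 2)⁻¹ : ℝ) • g') x := by
    exact (hasDerivAt_inv hgx).comp_hasFDerivAt x hg
  have hq : HasFDerivAt (fun y => f y / g y)
      (f x • ((-(g x ^ 2)⁻¹ : ℝ) • g') + (g x)⁻¹ • f') x := by
    simp only [div_eq_mul_inv]
    exact hf.mul hinv
  have hc := (hG.comp_hasFDerivAt x hq).fderiv
  have : fderiv ℝ (fun y => G (f y / g y)) x
      = G' • (f x • ((-(g x ^ 2)⁻¹ : ℝ) • g') + (g x)⁻¹ • f') := by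
    simpa [Function.comp_def] using hc
  rw [this]
  simp only [ContinuousLinearMap.smul_apply, ContinuousLinearMap.add_apply, smul_eq_mul]
  field_simp
  ring

lemma cube_ne_one {s : ℝ} (h : s ≠ 1) : s ^ 3 - 1 ≠ 0 := by
  intro h0
  apply h
  have hpos : s ^ 2 + s + 1 > 0 := by nlinarith [sq_nonneg (2 * s + 1)]
  have hf : (s - 1) * (s ^ 2 + s + 1) = 0 := by linear_combination h0
  rcases mul_eq_zero.1 hf with h1 | h1
  · linarith
  · linarith

lemma alg_key (a b c A B C : ℝ) (hb : b ≠ 0) (h1 : (c/b)^3 - 1 ≠ 0) (h2 : (a/b)^3 - 1 ≠ 0)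
    (heq : c*(a^3 - b^3)*B + b*(c^3 - a^3)*A + a*(b^3 - c^3)*C = 0) :
    1/((c/b)^3 - 1) * ((A*b - c*B)/b^2) - 1/((a/b)^3 - 1) * ((A*b - a*C)/b^2) = 0 := by
  have h1' : c^3 - b^3 ≠ 0 := by
    intro h; apply h1; field_simp; linear_combination h
  have h2' : a^3 - b^3 ≠ 0 := by
    intro h; apply h2; field_simp; linear_combination h
  have e1 : (c/b)^3 - 1 = (c^3 - b^3)/b^3 := by field_simp
  have e2 : (a/b)^3 - 1 = (a^3 - b^3)/b^3 := by field_simp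
  rw [e1, e2]
  field_simp
  linear_combination (-b) * heq

end aux

theorem degenerate_elliptic_equation_G_conservation_law
    (I : Set ℝ) (hI : IsOpen I) (hI1 : ∀ s ∈ I, s ≠ 1)
    (G : ℝ → ℝ) (hG : ∀ s ∈ I, HasDerivAt G (1 / (s ^ 3 - 1)) s)
    (Ω : Set (Fin 3 → ℝ)) (hΩ : IsOpen Ω)
    (u : (Fin 3 → ℝ) → ℝ) (hu : ContDiffOn ℝ 2 u Ω)
    (huy : ∀ X ∈ Ω, pd 1 u X ≠ 0)
    (hmem1 : ∀ X ∈ Ω, pd 2 u X / pd 1 u X ∈ I)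
    (hmem2 : ∀ X ∈ Ω, pd 0 u X / pd 1 u X ∈ I)
    (heq : ∀ X ∈ Ω,
      pd 2 u X * ((pd 0 u X) ^ 3 - (pd 1 u X) ^ 3) * pd 1 (pd 0 u) X
        + pd 1 u X * ((pd 2 u X) ^ 3 - (pd 0 u X) ^ 3) * pd 2 (pd 0 u) X
        + pd 0 u X * ((pd 1 u X) ^ 3 - (pd 2 u X) ^ 3) * pd 2 (pd 1 u) X = 0) :
    ∀ X ∈ Ω,
      pd 0 (fun Y => G (pd 2 u Y / pd 1 u Y)) X
        - pd 2 (fun Y => G (pd 0 u Y / pd 1 u Y)) X = 0 := by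
  intro X hX
  have hX2 : ContDiffAt ℝ 2 u X := hu.contDiffAt (hΩ.mem_nhds hX)
  have hdF : DifferentiableAt ℝ (fderiv ℝ u) X :=
    (hX2.fderiv_right (m := 1) (by norm_num)).differentiableAt (by norm_num)
  set H := fderiv ℝ (fderiv ℝ u) X with hH
  have hsym : ∀ v w, H v w = H w v := hX2.isSymmSndFDerivAt (by simp [minSmoothness_of_isRCLikeNormedField])
  -- derivative of pd i u
  have hpd : ∀ i : Fin 3, HasFDerivAt (pd i u)
      ((ContinuousLinearMap.apply ℝ ℝ (Pi.single i 1)).comp H) X := by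
    intro i
    exact (ContinuousLinearMap.apply ℝ ℝ (Pi.single i (1:ℝ))).hasFDerivAt.comp X hdF.hasFDerivAt
  have hpdv : ∀ i j : Fin 3,
      ((ContinuousLinearMap.apply ℝ ℝ (Pi.single i 1)).comp H) (Pi.single j 1)
        = H (Pi.single j 1) (Pi.single i 1) := by
    intro i j; rfl
  -- second derivatives in heq
  have hsec : ∀ i j : Fin 3, pd j (pd i u) X = H (Pi.single j 1) (Pi.single i 1) := by
    intro i j
    show fderiv ℝ (pd i u) X (Pi.single j 1) = _
    rw [(hpd i).fderiv]
    rfl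
  set a := pd 0 u X
  set b := pd 1 u X
  set c := pd 2 u X
  have hb : b ≠ 0 := huy X hX
  have h1 : (c / b) ^ 3 - 1 ≠ 0 := cube_ne_one (hI1 _ (hmem1 X hX))
  have h2 : (a / b) ^ 3 - 1 ≠ 0 := cube_ne_one (hI1 _ (hmem2 X hX))
  have key1 : pd 0 (fun Y => G (pd 2 u Y / pd 1 u Y)) X
      = 1 / ((c / b) ^ 3 - 1)
        * ((H (Pi.single 0 1) (Pi.single 2 1) * b - c * H (Pi.single 0 1) (Pi.single 1 1)) / b ^ 2) := by
    have := fderiv_G_div (hpd 2) (hpd 1) hb (hG _ (hmem1 X hX)) (Pi.single 0 1)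
    simpa [pd, hpdv, a, b, c] using this
  have key2 : pd 2 (fun Y => G (pd 0 u Y / pd 1 u Y)) X
      = 1 / ((a / b) ^ 3 - 1)
        * ((H (Pi.single 2 1) (Pi.single 0 1) * b - a * H (Pi.single 2 1) (Pi.single 1 1)) / b ^ 2) := by
    have := fderiv_G_div (hpd 0) (hpd 1) hb (hG _ (hmem2 X hX)) (Pi.single 2 1)
    simpa [pd, hpdv, a, b, c] using this
  have heqX := heq X hX
  rw [hsec 0 1, hsec 0 2, hsec 1 2] at heqX
  rw [key1, key2, hsym (Pi.single 2 1) (Pi.single 0 1), hsym (Pi.single 2 1) (Pi.single 1 1)]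
  exact alg_key a b c (H (Pi.single 0 1) (Pi.single 2 1)) (H (Pi.single 0 1) (Pi.single 1 1))
    (H (Pi.single 1 1) (Pi.single 2 1)) hb h1 h2
    (by rw [hsym (Pi.single 1 1) (Pi.single 0 1), hsym (Pi.single 2 1) (Pi.single 0 1),
          hsym (Pi.single 2 1) (Pi.single 1 1)] at heqX
        linear_combination heqX)
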